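/- Let α > 1/2, let T_α be the Riemann–Liouville operator on L²(0,1), (T_α u)(x) = α ∫₀ˣ (x − t)^{α−1} u(t) dt, with adjoint T_α*, and let P be the orthogonal projection onto constants, (Pu)(x) = ∫₀¹ u(t) dt. Then the operators T_α (I − P) T_α* (the covariance operator of the Riemann–Liouville bridge R_α°(x) = R_α(x) − x^α R_α(1)) and (I − P) T_α T_α* (I − P) (the covariance operator of the centered Riemann–Liouville process) have the same nonzero eigenvalues with multiplicities. -/

import Mathlib

open MeasureTheory

noncomputable section

/-- Lebesgue measure on `[0,1]`, as a measure on `ℝ`. -/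
def unitMeasure : Measure ℝ := volume.restrict (Set.Icc (0:ℝ) 1)

/-- `A` and `B` have the same nonzero eigenvalues with multiplicities. -/
def SameNonzeroEigenvalues {H : Type*} [NormedAddCommGroup H] [NormedSpace ℂ H]
    (A B : H →L[ℂ] H) : Prop :=
  ∀ l : ℂ, l ≠ 0 → ∀ m : ℕ, 1 ≤ m →
    Module.rank ℂ (LinearMap.ker (((A - l • 1) ^ m : H →L[ℂ] H) : H →ₗ[ℂ] H)) =
    Module.rank ℂ (LinearMap.ker (((B - l • 1) ^ m : H →L[ℂ] H) : H →ₗ[ℂ] H))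

namespace Stmt9Aux

/-! ### The swap principle: `XY` and `YX` have the same nonzero generalized eigenspaces -/

variable {H : Type*} [NormedAddCommGroup H] [NormedSpace ℂ H]

lemma pow_mul_comm_key (X Y : H →L[ℂ] H) (l : ℂ) (m : ℕ) :
    (Y * X - l • 1) ^ m * Y = Y * (X * Y - l • 1) ^ m := by
  induction m with
  | zero => simp
  | succ m ih =>
    have key : (Y * X - l • 1) * Y = Y * (X * Y - l • 1) := by
      rw [sub_mul, mul_sub, mul_assoc, smul_mul_assoc, mul_smul_comm, one_mul, mul_one]
    rw [pow_succ, mul_assoc, key, ← mul_assoc, ih, mul_assoc, ← pow_succ]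

lemma apply_pow_eq_smul (X Y : H →L[ℂ] H) (l : ℂ) (m : ℕ) (u : H) (hu : Y u = 0) :
    ((X * Y - l • 1) ^ m) u = ((-l) ^ m) • u := by
  induction m with
  | zero => simp
  | succ m ih =>
    rw [pow_succ', ContinuousLinearMap.mul_apply]
    have h1 : (X * Y - l • 1) u = (-l) • u := by
      simp [ContinuousLinearMap.sub_apply, ContinuousLinearMap.mul_apply, hu, neg_smul]
    rw [ih, _root_.map_smul, h1, smul_smul, ← pow_succ]

lemma rank_ker_le (X Y : H →L[ℂ] H) (l : ℂ) (hl : l ≠ 0) (m : ℕ) :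
    Module.rank ℂ (LinearMap.ker (((X * Y - l • 1) ^ m : H →L[ℂ] H) : H →ₗ[ℂ] H)) ≤
    Module.rank ℂ (LinearMap.ker (((Y * X - l • 1) ^ m : H →L[ℂ] H) : H →ₗ[ℂ] H)) := by
  set F := (X * Y - l • 1) ^ m with hF
  set G := (Y * X - l • 1) ^ m with hG
  have hmap : ∀ u ∈ LinearMap.ker (F : H →ₗ[ℂ] H), Y u ∈ LinearMap.ker (G : H →ₗ[ℂ] H) := by
    intro u hu
    have h1 : G (Y u) = (G * Y) u := rfl
    have h2 : (G * Y) u = Y (F u) := by rw [hG, pow_mul_comm_key, hF]; rfl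
    have : F u = 0 := hu
    simp only [LinearMap.mem_ker, ContinuousLinearMap.coe_coe] at *
    rw [h1, h2, this, map_zero]
  let g : LinearMap.ker (F : H →ₗ[ℂ] H) →ₗ[ℂ] LinearMap.ker (G : H →ₗ[ℂ] H) :=
    (Y : H →ₗ[ℂ] H).restrict (p := LinearMap.ker (F : H →ₗ[ℂ] H)) (q := LinearMap.ker (G : H →ₗ[ℂ] H)) hmap
  have hinj : Function.Injective g := by
    have h0 : ∀ z : LinearMap.ker (F : H →ₗ[ℂ] H), g z = 0 → z = 0 := by
      rintro ⟨u, hu⟩ hz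
      have hYu : Y u = 0 := congrArg Subtype.val hz
      have := apply_pow_eq_smul X Y l m u hYu
      have hFu : F u = 0 := hu
      rw [hF] at hFu
      rw [hFu] at this
      have : u = 0 := by
        have hne : ((-l) ^ m) ≠ 0 := pow_ne_zero _ (neg_ne_zero.mpr hl)
        rcases smul_eq_zero.mp this.symm with h | h
        · exact absurd h hne
        · exact h
      exact Subtype.ext this
    intro a b hab
    have : g (a - b) = 0 := by rw [map_sub, hab, sub_self]
    exact sub_eq_zero.mp (h0 _ this)
  exact LinearMap.rank_le_of_injective g hinj

lemma rank_ker_swap (X Y : H →L[ℂ] H) (l : ℂ) (hl : l ≠ 0) (m : ℕ) :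
    Module.rank ℂ (LinearMap.ker (((X * Y - l • 1) ^ m : H →L[ℂ] H) : H →ₗ[ℂ] H)) =
    Module.rank ℂ (LinearMap.ker (((Y * X - l • 1) ^ m : H →L[ℂ] H) : H →ₗ[ℂ] H)) :=
  le_antisymm (rank_ker_le X Y l hl m) (rank_ker_le Y X l hl m)

/-! ### The unit interval measure and the flip `x ↦ 1 - x` -/

instance : IsProbabilityMeasure unitMeasure :=
  ⟨by rw [unitMeasure, Measure.restrict_apply_univ, Real.volume_Icc]; norm_num⟩

lemma flipMP : MeasurePreserving (fun x : ℝ => 1 - x) unitMeasure unitMeasure := by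
  have h1 : MeasurePreserving (fun x : ℝ => 1 - x) volume volume := by
    have h := Measure.measurePreserving_neg (volume : Measure ℝ)
    have h2 := measurePreserving_add_left (volume : Measure ℝ) 1
    simpa [Function.comp_def, sub_eq_add_neg] using h2.comp h
  have hpre : (fun x : ℝ => 1 - x) ⁻¹' (Set.Icc 0 1) = Set.Icc 0 1 := by
    ext x
    simp only [Set.mem_preimage, Set.mem_Icc]
    constructor <;> (rintro ⟨a, b⟩; constructor <;> linarith)
  have h3 := h1.restrict_preimage (measurableSet_Icc : MeasurableSet (Set.Icc (0:ℝ) 1))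
  rw [hpre] at h3
  exact h3

lemma flipEmb : MeasurableEmbedding (fun x : ℝ => 1 - x) :=
  (MeasurableEquiv.subLeft (1:ℝ)).measurableEmbedding

abbrev Hsp := Lp ℂ 2 unitMeasure

def Jop : Hsp →L[ℂ] Hsp :=
  LinearMap.mkContinuous
    { toFun := Lp.compMeasurePreserving (fun x : ℝ => 1 - x) flipMP
      map_add' := fun f g => map_add _ f g
      map_smul' := by
        intro c g
        apply Lp.ext
        have h1 := Lp.coeFn_compMeasurePreserving (c • g) flipMP
        have h2 := Lp.coeFn_compMeasurePreserving g flipMP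
        have h3 : (c • g : Hsp) =ᵐ[unitMeasure] fun x => c • (g : ℝ → ℂ) x := Lp.coeFn_smul c g
        have h4 : ((c • g : Hsp) : ℝ → ℂ) ∘ (fun x : ℝ => 1 - x)
            =ᵐ[unitMeasure] (fun x : ℝ => c • (g : ℝ → ℂ) x) ∘ (fun x : ℝ => 1 - x) :=
          flipMP.quasiMeasurePreserving.ae_eq_comp h3
        have h5 := Lp.coeFn_smul c (Lp.compMeasurePreserving (fun x : ℝ => 1 - x) flipMP g)
        filter_upwards [h1, h2, h4, h5] with x e1 e2 e4 e5
        simp only [RingHom.id_apply]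
        rw [e5, e1]
        rw [Function.comp_apply] at e4 ⊢
        rw [e4]
        simp only [Pi.smul_apply]
        rw [e2]
        rfl }
    1
    (fun g => by
      rw [one_mul]
      exact le_of_eq (Lp.norm_compMeasurePreserving g flipMP))

lemma Jop_coe (g : Hsp) : (Jop g : ℝ → ℂ) =ᵐ[unitMeasure] fun x => g (1 - x) :=
  Lp.coeFn_compMeasurePreserving g flipMP

lemma Jop_comp_ae (g : ℝ → ℂ) (g' : ℝ → ℂ) (h : g =ᵐ[unitMeasure] g') :
    (fun x : ℝ => g (1 - x)) =ᵐ[unitMeasure] fun x : ℝ => g' (1 - x) :=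
  flipMP.quasiMeasurePreserving.ae_eq_comp h

lemma Jop_Jop : Jop ∘L Jop = 1 := by
  ext g : 1
  apply Lp.ext
  have h1 := Jop_coe (Jop g)
  have h2 := Jop_comp_ae _ _ (Jop_coe g)
  filter_upwards [h1, h2] with x e1 e2
  rw [ContinuousLinearMap.comp_apply, e1, e2]
  simp

/-! ### The projection onto constants -/

lemma P_idem (P : Hsp →L[ℂ] Hsp)
    (hP : ∀ u : Hsp, ∀ᵐ x ∂unitMeasure, P u x = ∫ t, u t ∂unitMeasure) :
    P * P = P := by
  ext u : 1
  apply Lp.ext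
  have h1 := hP (P u)
  have h2 := hP u
  have hint : ∫ t, (P u : ℝ → ℂ) t ∂unitMeasure = ∫ t, (u : ℝ → ℂ) t ∂unitMeasure := by
    rw [integral_congr_ae h2]
    simp
  filter_upwards [h1, h2] with x e1 e2
  rw [ContinuousLinearMap.mul_apply, e1, hint, e2]

lemma JPJ (P : Hsp →L[ℂ] Hsp)
    (hP : ∀ u : Hsp, ∀ᵐ x ∂unitMeasure, P u x = ∫ t, u t ∂unitMeasure) :
    Jop ∘L P ∘L Jop = P := by
  ext u : 1
  apply Lp.ext
  have hPu := hP u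
  have hPJu := hP (Jop u)
  have hintJ : ∫ t, (Jop u : ℝ → ℂ) t ∂unitMeasure = ∫ t, (u : ℝ → ℂ) t ∂unitMeasure := by
    rw [integral_congr_ae (Jop_coe u)]
    exact flipMP.integral_comp flipEmb _
  have h5 : P (Jop u) = P u := by
    apply Lp.ext
    filter_upwards [hPJu, hPu] with x e1 e2
    rw [e1, hintJ, e2]
  have hcomp : (Jop ∘L P ∘L Jop) u = Jop (P u) := by
    rw [ContinuousLinearMap.comp_apply, ContinuousLinearMap.comp_apply, h5]
  rw [hcomp]
  filter_upwards [Jop_coe (P u), Jop_comp_ae _ _ hPu, hPu] with x e1 e2 e3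
  rw [e1, e2, e3]

/-! ### The kernel -/

def Kker (α : ℝ) : ℝ × ℝ → ℂ := fun p =>
  if 0 ≤ p.2 ∧ p.2 ≤ p.1 then ((α * (p.1 - p.2) ^ (α - 1) : ℝ) : ℂ) else 0

lemma measurable_Kker (α : ℝ) : Measurable (Kker α) := by
  unfold Kker
  apply Measurable.ite
  · exact (measurableSet_le measurable_const measurable_snd).inter
      (measurableSet_le measurable_snd measurable_fst)
  · exact Complex.measurable_ofReal.comp
      ((measurable_const.mul ((measurable_fst.sub measurable_snd).pow_const (α - 1))))
  · exact measurable_const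


lemma Kker_apply (α x t : ℝ) :
    Kker α (x, t) = if 0 ≤ t ∧ t ≤ x then ((α * (x - t) ^ (α - 1) : ℝ) : ℂ) else 0 := rfl

lemma sq_norm_Kker (α : ℝ) (hα0 : 0 < α) (x t : ℝ) :
    ‖Kker α (x, t)‖ ^ 2
      = (Set.Icc 0 x).indicator (fun t => α ^ 2 * (x - t) ^ (2 * α - 2)) t := by
  unfold Kker
  by_cases h : 0 ≤ t ∧ t ≤ x
  · have hnn : (0:ℝ) ≤ x - t := sub_nonneg.mpr h.2
    rw [if_pos h, Set.indicator_of_mem (Set.mem_Icc.mpr h)]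
    have e0 : ‖((α * (x - t) ^ (α - 1) : ℝ) : ℂ)‖ ^ 2 = (α * (x - t) ^ (α - 1)) ^ 2 := by
      rw [Complex.norm_real, Real.norm_eq_abs, sq_abs]
    rw [e0]
    have e1 : ((x - t) ^ (α - 1)) ^ (2:ℕ) = (x - t) ^ ((α - 1) * 2) := by
      rw [← Real.rpow_natCast ((x - t) ^ (α - 1)) 2, ← Real.rpow_mul hnn]
      norm_num
    have e2 : (α - 1) * 2 = 2 * α - 2 := by ring
    rw [mul_pow, e1, e2]
  · rw [if_neg h, Set.indicator_of_notMem (by rwa [Set.mem_Icc])]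
    simp

lemma memLp_Kker (α : ℝ) (hα : 1 / 2 < α) :
    MemLp (Kker α) 2 (unitMeasure.prod unitMeasure) := by
  have hα0 : 0 < α := by linarith
  have hc : (-1:ℝ) < 2 * α - 2 := by linarith
  have hc1 : (0:ℝ) < 2 * α - 1 := by linarith
  have hKm : AEStronglyMeasurable (Kker α) (unitMeasure.prod unitMeasure) :=
    (measurable_Kker α).aestronglyMeasurable
  rw [memLp_two_iff_integrable_sq_norm hKm]
  have hGm : AEStronglyMeasurable (fun p : ℝ × ℝ => ‖Kker α p‖ ^ 2)
      (unitMeasure.prod unitMeasure) :=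
    ((measurable_Kker α).norm.pow_const 2).aestronglyMeasurable
  refine (integrable_prod_iff hGm).mpr ⟨?_, ?_⟩
  · have hae : ∀ᵐ x ∂unitMeasure, x ∈ Set.Icc (0:ℝ) 1 := ae_restrict_mem measurableSet_Icc
    filter_upwards [hae] with x hx
    have h0 : IntervalIntegrable (fun s : ℝ => s ^ (2 * α - 2)) volume 0 x :=
      intervalIntegral.intervalIntegrable_rpow' hc
    have h2 : IntervalIntegrable (fun t : ℝ => (x - t) ^ (2 * α - 2)) volume 0 x := by
      simpa using (h0.comp_sub_left x).symm
    have hIoo : IntegrableOn (fun t => α ^ 2 * (x - t) ^ (2 * α - 2)) (Set.Icc 0 x) volume :=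
      (intervalIntegrable_iff_integrableOn_Icc_of_le hx.1).mp (h2.const_mul (α ^ 2))
    have hIμ : IntegrableOn (fun t => α ^ 2 * (x - t) ^ (2 * α - 2)) (Set.Icc 0 x)
        unitMeasure := by
      unfold IntegrableOn
      rw [unitMeasure, Measure.restrict_restrict measurableSet_Icc,
        Set.inter_eq_self_of_subset_left (Set.Icc_subset_Icc le_rfl hx.2)]
      exact hIoo
    exact (hIμ.integrable_indicator measurableSet_Icc).congr
      (Filter.Eventually.of_forall fun t => (sq_norm_Kker α hα0 x t).symm)
  · apply Integrable.mono' (integrable_const (α ^ 2 * (1 / (2 * α - 1))))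
      hGm.norm.integral_prod_right'
    have hae : ∀ᵐ x ∂unitMeasure, x ∈ Set.Icc (0:ℝ) 1 := ae_restrict_mem measurableSet_Icc
    filter_upwards [hae] with x hx
    have hGnn : ∀ t, 0 ≤ ‖Kker α (x, t)‖ ^ 2 := fun t => pow_nonneg (norm_nonneg _) 2
    have hnorm : (fun t => ‖‖Kker α (x, t)‖ ^ 2‖) = fun t => ‖Kker α (x, t)‖ ^ 2 := by
      funext t; rw [Real.norm_eq_abs, abs_of_nonneg (hGnn t)]
    have hval : ∫ t, ‖Kker α (x, t)‖ ^ 2 ∂unitMeasure ≤ α ^ 2 * (1 / (2 * α - 1)) := by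
      rw [integral_congr_ae (Filter.Eventually.of_forall fun t => sq_norm_Kker α hα0 x t)]
      rw [integral_indicator measurableSet_Icc]
      rw [unitMeasure, Measure.restrict_restrict measurableSet_Icc,
        Set.inter_eq_self_of_subset_left (Set.Icc_subset_Icc le_rfl hx.2)]
      rw [integral_Icc_eq_integral_Ioc, ← intervalIntegral.integral_of_le hx.1]
      rw [intervalIntegral.integral_const_mul]
      rw [intervalIntegral.integral_comp_sub_left (fun s : ℝ => s ^ (2 * α - 2)) x]
      simp only [sub_self, sub_zero]
      rw [integral_rpow (Or.inl hc)]
      rw [Real.zero_rpow (by linarith : 2 * α - 2 + 1 ≠ 0)]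
      have hx1 : x ^ (2 * α - 1) ≤ 1 :=
        Real.rpow_le_one hx.1 hx.2 (by linarith)
      have hd : (x ^ (2 * α - 2 + 1) - 0) / (2 * α - 2 + 1) ≤ 1 / (2 * α - 1) := by
        rw [sub_zero, show 2 * α - 2 + 1 = 2 * α - 1 by ring]
        gcongr
      exact mul_le_mul_of_nonneg_left hd (sq_nonneg α)
    have hInn : 0 ≤ ∫ t, ‖Kker α (x, t)‖ ^ 2 ∂unitMeasure :=
      integral_nonneg fun t => hGnn t
    rw [hnorm, Real.norm_eq_abs, abs_of_nonneg hInn]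
    exact hval

lemma memLp_prod_mul (u v : Hsp) :
    MemLp (fun p : ℝ × ℝ => (starRingEnd ℂ) ((u : ℝ → ℂ) p.1) * (v : ℝ → ℂ) p.2) 2
      (unitMeasure.prod unitMeasure) := by
  have hf := Lp.aestronglyMeasurable u
  have hg := Lp.aestronglyMeasurable v
  have hfst : AEStronglyMeasurable (fun p : ℝ × ℝ => (u : ℝ → ℂ) p.1)
      (unitMeasure.prod unitMeasure) :=
    hf.comp_quasiMeasurePreserving Measure.quasiMeasurePreserving_fst
  have hsnd : AEStronglyMeasurable (fun p : ℝ × ℝ => (v : ℝ → ℂ) p.2)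
      (unitMeasure.prod unitMeasure) :=
    hg.comp_quasiMeasurePreserving Measure.quasiMeasurePreserving_snd
  have hA : AEStronglyMeasurable
      (fun p : ℝ × ℝ => (starRingEnd ℂ) ((u : ℝ → ℂ) p.1) * (v : ℝ → ℂ) p.2)
      (unitMeasure.prod unitMeasure) :=
    (continuous_star.comp_aestronglyMeasurable hfst).mul hsnd
  rw [memLp_two_iff_integrable_sq_norm hA]
  have h1 : Integrable (fun x => ‖(u : ℝ → ℂ) x‖ ^ 2) unitMeasure :=
    (memLp_two_iff_integrable_sq_norm hf).mp (Lp.memLp u)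
  have h2 : Integrable (fun x => ‖(v : ℝ → ℂ) x‖ ^ 2) unitMeasure :=
    (memLp_two_iff_integrable_sq_norm hg).mp (Lp.memLp v)
  exact (h1.mul_prod h2).congr (Filter.Eventually.of_forall fun p => by
    simp [norm_mul, mul_pow, RCLike.norm_conj])

lemma integrable_R (α : ℝ) (hα : 1 / 2 < α) (u v : Hsp) :
    Integrable (fun p : ℝ × ℝ =>
      (starRingEnd ℂ) ((u : ℝ → ℂ) p.1) * (Kker α p * (v : ℝ → ℂ) p.2))
      (unitMeasure.prod unitMeasure) := by
  have h := (memLp_prod_mul u v).smul (r := 1) (memLp_Kker α hα)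
  have h1 := memLp_one_iff_integrable.mp h
  exact h1.congr (Filter.Eventually.of_forall fun p => by
    simp only [Pi.smul_apply', Pi.smul_apply, smul_eq_mul]; ring)

lemma adjoint_flip (α : ℝ) (hα : 1 / 2 < α) (Tα : Hsp →L[ℂ] Hsp)
    (hTα : ∀ u : Hsp, ∀ᵐ x ∂unitMeasure,
      Tα u x = ∫ t in Set.Icc (0:ℝ) x, ((α * (x - t) ^ (α - 1) : ℝ) : ℂ)
        * u t ∂unitMeasure) :
    Jop ∘L Tα ∘L Jop = ContinuousLinearMap.adjoint Tα := by
  rw [ContinuousLinearMap.eq_adjoint_iff]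
  intro u v
  have hker : ∀ (y : ℝ) (h : ℝ → ℂ),
      (∫ t in Set.Icc (0:ℝ) y, ((α * (y - t) ^ (α - 1) : ℝ) : ℂ) * h t ∂unitMeasure)
        = ∫ t, Kker α (y, t) * h t ∂unitMeasure := by
    intro y h
    rw [← integral_indicator measurableSet_Icc]
    refine integral_congr_ae (Filter.Eventually.of_forall fun t => ?_)
    simp only [Set.indicator_apply, Set.mem_Icc, Kker_apply]
    by_cases ht : 0 ≤ t ∧ t ≤ y
    · rw [if_pos ht, if_pos ht]
    · rw [if_neg ht, if_neg ht, zero_mul]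
  have hw : ((Jop u : Hsp) : ℝ → ℂ) =ᵐ[unitMeasure] fun t => (u : ℝ → ℂ) (1 - t) := Jop_coe u
  -- the measure-preserving flip on the square
  have hΦ : MeasurePreserving (fun p : ℝ × ℝ => ((1:ℝ) - p.2, (1:ℝ) - p.1))
      (unitMeasure.prod unitMeasure) (unitMeasure.prod unitMeasure) :=
    Measure.measurePreserving_swap.comp (flipMP.prod flipMP)
  have hΦemb : MeasurableEmbedding (fun p : ℝ × ℝ => ((1:ℝ) - p.2, (1:ℝ) - p.1)) :=
    (((MeasurableEquiv.subLeft (1:ℝ)).prodCongr (MeasurableEquiv.subLeft (1:ℝ))).trans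
      MeasurableEquiv.prodComm).measurableEmbedding
  have hsq : ∀ᵐ p ∂(unitMeasure.prod unitMeasure),
      p.1 ∈ Set.Icc (0:ℝ) 1 ∧ p.2 ∈ Set.Icc (0:ℝ) 1 := by
    have hprod : unitMeasure.prod unitMeasure = (volume.prod volume).restrict
        ((Set.Icc (0:ℝ) 1) ×ˢ (Set.Icc (0:ℝ) 1)) := Measure.prod_restrict _ _
    rw [hprod]
    filter_upwards [ae_restrict_mem (measurableSet_Icc.prod measurableSet_Icc)] with p hp
    exact ⟨hp.1, hp.2⟩
  have hRΦ : (fun p : ℝ × ℝ =>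
        (starRingEnd ℂ) ((u : ℝ → ℂ) p.1) * (Kker α p * (v : ℝ → ℂ) p.2))
        ∘ (fun p : ℝ × ℝ => ((1:ℝ) - p.2, (1:ℝ) - p.1))
      =ᵐ[unitMeasure.prod unitMeasure]
      fun p : ℝ × ℝ =>
        (starRingEnd ℂ) (Kker α p * (u : ℝ → ℂ) (1 - p.2)) * (v : ℝ → ℂ) (1 - p.1) := by
    filter_upwards [hsq] with p hp
    simp only [Function.comp_apply]
    obtain ⟨hp1, hp2⟩ := hp
    rw [Set.mem_Icc] at hp1 hp2
    have hKflip : Kker α (1 - p.2, 1 - p.1) = Kker α p := by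
      unfold Kker
      simp only
      rw [show (1:ℝ) - p.2 - (1 - p.1) = p.1 - p.2 by ring]
      have hcond : (0 ≤ 1 - p.1 ∧ 1 - p.1 ≤ 1 - p.2) ↔ (0 ≤ p.2 ∧ p.2 ≤ p.1) := by
        constructor <;> (rintro ⟨a, b⟩; exact ⟨by linarith, by linarith⟩)
      exact if_congr hcond rfl rfl
    rw [hKflip, map_mul]
    have hKconj : (starRingEnd ℂ) (Kker α p) = Kker α p := by
      unfold Kker
      rw [apply_ite (starRingEnd ℂ), map_zero, Complex.conj_ofReal]
    rw [hKconj]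
    ring
  have hRint := integrable_R α hα u v
  have hL_int : Integrable (fun p : ℝ × ℝ =>
      (starRingEnd ℂ) (Kker α p * (u : ℝ → ℂ) (1 - p.2)) * (v : ℝ → ℂ) (1 - p.1))
      (unitMeasure.prod unitMeasure) :=
    ((hΦ.integrable_comp hRint.aestronglyMeasurable).mpr hRint).congr hRΦ
  -- right-hand side
  have hRHS : (inner ℂ u (Tα v) : ℂ)
      = ∫ p, (starRingEnd ℂ) ((u : ℝ → ℂ) p.1) * (Kker α p * (v : ℝ → ℂ) p.2)
          ∂(unitMeasure.prod unitMeasure) := by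
    rw [L2.inner_def]
    have e1 : ∀ᵐ x ∂unitMeasure, (inner ℂ ((u : ℝ → ℂ) x) ((Tα v : ℝ → ℂ) x) : ℂ)
        = (starRingEnd ℂ) ((u : ℝ → ℂ) x)
            * (∫ t, Kker α (x, t) * (v : ℝ → ℂ) t ∂unitMeasure) := by
      filter_upwards [hTα v] with x hx
      rw [RCLike.inner_apply', hx, hker]
    rw [integral_congr_ae e1]
    have e2 : ∀ x : ℝ, (starRingEnd ℂ) ((u : ℝ → ℂ) x)
          * (∫ t, Kker α (x, t) * (v : ℝ → ℂ) t ∂unitMeasure)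
        = ∫ t, (starRingEnd ℂ) ((u : ℝ → ℂ) x) * (Kker α (x, t) * (v : ℝ → ℂ) t)
            ∂unitMeasure :=
      fun x => (integral_const_mul _ _).symm
    rw [integral_congr_ae (Filter.Eventually.of_forall e2)]
    exact integral_integral hRint
  -- left-hand side
  have hLHS : (inner ℂ ((Jop ∘L Tα ∘L Jop) u) v : ℂ)
      = ∫ p, (starRingEnd ℂ) (Kker α p * (u : ℝ → ℂ) (1 - p.2)) * (v : ℝ → ℂ) (1 - p.1)
          ∂(unitMeasure.prod unitMeasure) := by
    rw [L2.inner_def]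
    have e1 : ∀ᵐ x ∂unitMeasure,
        (inner ℂ (((Jop ∘L Tα ∘L Jop) u : ℝ → ℂ) x) ((v : ℝ → ℂ) x) : ℂ)
        = (starRingEnd ℂ) ((Tα (Jop u) : ℝ → ℂ) (1 - x)) * (v : ℝ → ℂ) x := by
      have hco : (((Jop ∘L Tα ∘L Jop) u : Hsp) : ℝ → ℂ)
          =ᵐ[unitMeasure] fun x => (Tα (Jop u) : ℝ → ℂ) (1 - x) := Jop_coe (Tα (Jop u))
      filter_upwards [hco] with x hx
      rw [RCLike.inner_apply', hx]
    rw [integral_congr_ae e1]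
    have hstep : ∫ x, (starRingEnd ℂ) ((Tα (Jop u) : ℝ → ℂ) (1 - x)) * (v : ℝ → ℂ) x
          ∂unitMeasure
        = ∫ y, (starRingEnd ℂ) ((Tα (Jop u) : ℝ → ℂ) y) * (v : ℝ → ℂ) (1 - y)
          ∂unitMeasure := by
      have hcv := flipMP.integral_comp flipEmb
        (fun y => (starRingEnd ℂ) ((Tα (Jop u) : ℝ → ℂ) y) * (v : ℝ → ℂ) (1 - y))
      rw [← hcv]
      refine integral_congr_ae (Filter.Eventually.of_forall fun x => ?_)
      simp [sub_sub_cancel]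
    rw [hstep]
    have e3 : ∀ᵐ y ∂unitMeasure,
        (starRingEnd ℂ) ((Tα (Jop u) : ℝ → ℂ) y) * (v : ℝ → ℂ) (1 - y)
        = ∫ t, (starRingEnd ℂ) (Kker α (y, t) * (u : ℝ → ℂ) (1 - t))
            * (v : ℝ → ℂ) (1 - y) ∂unitMeasure := by
      filter_upwards [hTα (Jop u)] with y hy
      rw [hy, hker]
      have e4 : (∫ t, Kker α (y, t) * ((Jop u : Hsp) : ℝ → ℂ) t ∂unitMeasure)
          = ∫ t, Kker α (y, t) * (u : ℝ → ℂ) (1 - t) ∂unitMeasure :=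
        integral_congr_ae (hw.mono fun t ht => by simp only [ht])
      rw [e4, ← integral_conj, ← integral_mul_const]
    rw [integral_congr_ae e3]
    exact integral_integral hL_int
  rw [hLHS, hRHS]
  have hfin := hΦ.integral_comp hΦemb
    (fun p : ℝ × ℝ => (starRingEnd ℂ) ((u : ℝ → ℂ) p.1) * (Kker α p * (v : ℝ → ℂ) p.2))
  rw [← hfin]
  exact (integral_congr_ae hRΦ).symm

end Stmt9Aux

open Stmt9Aux

/-- For `α > 1/2`, with `T_α` the Riemann–Liouville operator on `L²(0,1)` and `P` the
projection onto constants, the operators `T_α (I - P) T_α*` (covariance of the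
Riemann–Liouville bridge) and `(I - P) T_α T_α* (I - P)` (covariance of the centered
Riemann–Liouville process) have the same nonzero eigenvalues with multiplicities. -/
theorem statement9 (α : ℝ) (hα : 1 / 2 < α)
    (Tα P : Lp ℂ 2 unitMeasure →L[ℂ] Lp ℂ 2 unitMeasure)
    (hTα : ∀ u : Lp ℂ 2 unitMeasure, ∀ᵐ x ∂unitMeasure,
      Tα u x = ∫ t in Set.Icc (0:ℝ) x, ((α * (x - t) ^ (α - 1) : ℝ) : ℂ)
        * u t ∂unitMeasure)
    (hP : ∀ u : Lp ℂ 2 unitMeasure, ∀ᵐ x ∂unitMeasure,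
      P u x = ∫ t, u t ∂unitMeasure) :
    SameNonzeroEigenvalues
      (Tα ∘L (1 - P) ∘L ContinuousLinearMap.adjoint Tα)
      ((1 - P) ∘L Tα ∘L ContinuousLinearMap.adjoint Tα ∘L (1 - P)) := by
  intro l hl m hm
  set S' := ContinuousLinearMap.adjoint Tα with hS'
  set Q : Lp ℂ 2 unitMeasure →L[ℂ] Lp ℂ 2 unitMeasure := 1 - P with hQdef
  set J : Lp ℂ 2 unitMeasure →L[ℂ] Lp ℂ 2 unitMeasure := Stmt9Aux.Jop with hJdef
  have hJJ : J * J = 1 := Jop_Jop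
  have hJS : J * (Tα * J) = S' := adjoint_flip α hα Tα hTα
  have hPP : P * P = P := P_idem P hP
  have hQ2 : Q * Q = Q := by
    rw [hQdef, sub_mul, one_mul, mul_sub, mul_one, hPP, sub_self, sub_zero]
  have hJQ : J * (Q * J) = Q := by
    have h2 : J * (P * J) = P := JPJ P hP
    have h1 : J * (Q * J) = J * J - J * (P * J) := by rw [hQdef]; noncomm_ring
    rw [h1, hJJ, h2]
  have hJS2 : J * (S' * J) = Tα := by
    rw [← hJS]
    calc J * ((J * (Tα * J)) * J) = (J * J) * (Tα * (J * J)) := by noncomm_ring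
      _ = Tα := by rw [hJJ, one_mul, mul_one]
  have cancelJJ : ∀ A : Lp ℂ 2 unitMeasure →L[ℂ] Lp ℂ 2 unitMeasure,
      J * (J * A) = A := fun A => by rw [← mul_assoc, hJJ, one_mul]
  have hconj : J * ((Tα * (Q * S')) * J) = S' * (Q * Tα) := by
    have hexp : (J * (Tα * J)) * ((J * (Q * J)) * (J * (S' * J))) = S' * (Q * Tα) := by
      rw [hJS, hJQ, hJS2]
    have hexp2 : (J * (Tα * J)) * ((J * (Q * J)) * (J * (S' * J)))
        = J * ((Tα * (Q * S')) * J) := by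
      simp only [mul_assoc]
      simp only [cancelJJ]
    rw [← hexp2, hexp]
  let N : (Lp ℂ 2 unitMeasure →L[ℂ] Lp ℂ 2 unitMeasure) → Cardinal :=
    fun T => Module.rank ℂ (LinearMap.ker (((T - l • 1) ^ m : Lp ℂ 2 unitMeasure →L[ℂ] Lp ℂ 2 unitMeasure) :
        Lp ℂ 2 unitMeasure →ₗ[ℂ] Lp ℂ 2 unitMeasure))
  show N (Tα * (Q * S')) = N (Q * (Tα * (S' * Q)))
  have step1 : N (Tα * (Q * S')) = N (J * ((Tα * (Q * S')) * J)) := by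
    have h := rank_ker_swap ((Tα * (Q * S')) * J) J l hl m
    rw [mul_assoc, hJJ, mul_one] at h
    exact h
  have c1 : N (Tα * (Q * S')) = N (S' * (Q * Tα)) := by
    rw [step1, hconj]
  have c2 : N (Q * (Tα * (S' * Q))) = N (S' * (Q * Tα)) := by
    have s1 := rank_ker_swap Q (Tα * (S' * Q)) l hl m
    have e : (Tα * (S' * Q)) * Q = Tα * (S' * Q) := by
      rw [mul_assoc, mul_assoc, hQ2]
    have s2 := rank_ker_swap Tα (S' * Q) l hl m
    have e2 : (S' * Q) * Tα = S' * (Q * Tα) := mul_assoc _ _ _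
    calc N (Q * (Tα * (S' * Q))) = N ((Tα * (S' * Q)) * Q) := s1
      _ = N (Tα * (S' * Q)) := by rw [e]
      _ = N ((S' * Q) * Tα) := s2
      _ = N (S' * (Q * Tα)) := by rw [e2]
  exact c1.trans c2.symm
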